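/- Every simple path is non-repetitively (32m³+1 : m)-choosable: for every m ≥ 1, every n, and every assignment L of a set of at least 32m³+1 colors to each position i ∈ {1,…,n}, there exists an assignment M with M(i) ⊆ L(i) and |M(i)| ≥ m for each i, such that every coloring c with c(i) ∈ M(i) for all i yields a non-repetitive sequence (c(1),…,c(n)). -/

import Mathlib

/-- A sequence `x` of length `n` is non-repetitive if no block of it is a repetition. -/
def NonRepetitive {α : Type*} {n : ℕ} (x : Fin n → α) : Prop :=
  ∀ (i l : ℕ) (h : i + 2 * l ≤ n), 1 ≤ l →
    ¬ ∀ k : ℕ, (hk : k < l) →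
      x ⟨i + k, by omega⟩ = x ⟨i + l + k, by omega⟩

open Finset

attribute [local instance] Classical.propDecidable
set_option maxHeartbeats 1000000

namespace NonRepChoose2
variable {α : Type*}
variable (m n : ℕ) (L1 : Fin n → Finset α)

noncomputable def Fam (i : ℕ) : Finset (Finset α) :=
  if h : i < n then (L1 ⟨i, h⟩).powersetCard m else {∅}

noncomputable def Seqs (j : ℕ) : Finset (Fin j → Finset α) :=
  Fintype.piFinset (fun i : Fin j => Fam m n L1 i.val)

def GoodP (j : ℕ) (M : Fin j → Finset α) : Prop :=
  ∀ (i l : ℕ) (h : i + 2 * l ≤ j), 1 ≤ l →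
    ∃ k, ∃ _hk : k < l, Disjoint (M ⟨i + k, by omega⟩) (M ⟨i + l + k, by omega⟩)

noncomputable def Gd (j : ℕ) : Finset (Fin j → Finset α) :=
  (Seqs m n L1 j).filter (GoodP j)

noncomputable def g (j : ℕ) : ℕ := (Gd m n L1 j).card

def resLE {j' j : ℕ} (h : j' ≤ j) (M : Fin j → Finset α) : Fin j' → Finset α :=
  fun i => M (Fin.castLE h i)

variable {m n L1}

lemma mem_Seqs {j : ℕ} {M : Fin j → Finset α} :
    M ∈ Seqs m n L1 j ↔ ∀ i : Fin j, M i ∈ Fam m n L1 i.val := by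
  simp [Seqs, Fintype.mem_piFinset]

lemma res_mem_Seqs {j' j : ℕ} (h : j' ≤ j) {M : Fin j → Finset α} (hM : M ∈ Seqs m n L1 j) :
    resLE h M ∈ Seqs m n L1 j' := by
  rw [mem_Seqs] at hM ⊢; intro i; exact hM (Fin.castLE h i)

lemma good_mono {j' j : ℕ} (h : j' ≤ j) {M : Fin j → Finset α} (hM : GoodP j M) :
    GoodP j' (resLE h M) := by
  intro i l hil hl
  obtain ⟨k, hk, hd⟩ := hM i l (by omega) hl
  exact ⟨k, hk, hd⟩

-- extension lower bound
lemma ext_lower (N : ℕ) (hcard : ∀ i, (L1 i).card = N) {j : ℕ} (hj : j < n) :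
    N.choose m * g m n L1 j ≤
      ((Seqs m n L1 (j+1)).filter
        (fun M => GoodP j (resLE (Nat.le_succ j) M))).card := by
  have hF : (Fam m n L1 j).card = N.choose m := by
    rw [Fam, dif_pos hj, card_powersetCard, hcard]
  have hsrc : ((Gd m n L1 j) ×ˢ (Fam m n L1 j)).card = N.choose m * g m n L1 j := by
    rw [card_product, hF, g, Nat.mul_comm]
  rw [← hsrc]
  apply card_le_card_of_injOn (fun PA => Fin.snoc PA.1 PA.2)
  · rintro ⟨P, A⟩ hPA
    rw [mem_coe, mem_product] at hPA
    obtain ⟨hP, hA⟩ := hPA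
    rw [Gd, mem_filter] at hP
    rw [mem_coe, mem_filter]
    constructor
    · rw [mem_Seqs]
      intro i
      refine Fin.lastCases ?_ ?_ i
      · beta_reduce; rw [Fin.snoc_last]; exact hA
      · intro i'
        beta_reduce; rw [Fin.snoc_castSucc]
        have := (mem_Seqs.mp hP.1) i'
        exact this
    · have hres : resLE (Nat.le_succ j) (Fin.snoc P A : Fin (j+1) → Finset α) = P := by
        funext i
        have h1 : (Fin.castLE (Nat.le_succ j) i) = Fin.castSucc i := by
          apply Fin.ext; rfl
        show (Fin.snoc P A : Fin (j+1) → Finset α) (Fin.castLE (Nat.le_succ j) i) = P i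
        rw [h1, Fin.snoc_castSucc]
      rw [hres]
      exact hP.2
  · rintro ⟨P, A⟩ _ ⟨P', A'⟩ _ hEq
    simp only at hEq
    have hA : A = A' := by
      have := congrFun hEq (Fin.last j)
      rwa [Fin.snoc_last, Fin.snoc_last] at this
    have hP : P = P' := by
      funext i
      have := congrFun hEq (Fin.castSucc i)
      rwa [Fin.snoc_castSucc, Fin.snoc_castSucc] at this
    rw [Prod.mk.injEq]
    exact ⟨hP, hA⟩

-- the bad set for period l
variable (m n L1) in
noncomputable def BadSet (j l : ℕ) : Finset (Fin (j+1) → Finset α) :=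
  (Seqs m n L1 (j+1)).filter (fun M =>
    GoodP (j+1-l) (resLE (by omega) M) ∧
    ∀ k, (_hk : k < l) → (_h2 : 2 * l ≤ j + 1) →
      ¬ Disjoint (M ⟨j+1-2*l+k, by omega⟩) (M ⟨j+1-l+k, by omega⟩))

-- decomposition: good-restriction-but-not-good is covered by the bad sets
lemma bad_decomp {j : ℕ} :
    (Seqs m n L1 (j+1)).filter
      (fun M => GoodP j (resLE (Nat.le_succ j) M) ∧ ¬ GoodP (j+1) M)
    ⊆ (Icc 1 ((j+1)/2)).biUnion (fun l => BadSet m n L1 j l) := by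
  intro M hM
  rw [mem_filter] at hM
  obtain ⟨hMS, hgood, hbad⟩ := hM
  rw [GoodP] at hbad
  push_neg at hbad
  obtain ⟨i, l, hil, hl, hnod⟩ := hbad
  -- the violated block must end at position j+1
  have hend : i + 2 * l = j + 1 := by
    by_contra hne
    have hle : i + 2 * l ≤ j := by omega
    obtain ⟨k, hk, hd⟩ := hgood i l hle hl
    exact (hnod k hk) hd
  rw [mem_biUnion]
  refine ⟨l, by rw [mem_Icc]; omega, ?_⟩
  rw [BadSet, mem_filter]
  refine ⟨hMS, ?_, ?_⟩
  · exact good_mono (j := j) (by omega) hgood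
  · intro k hk h2 hd
    have hi1 : j + 1 - 2*l + k = i + k := by omega
    have hi2 : j + 1 - l + k = i + l + k := by omega
    apply hnod k hk
    have e1 : (⟨j+1-2*l+k, by omega⟩ : Fin (j+1)) = ⟨i+k, by omega⟩ := by
      apply Fin.ext; simpa using hi1
    have e2 : (⟨j+1-l+k, by omega⟩ : Fin (j+1)) = ⟨i+l+k, by omega⟩ := by
      apply Fin.ext; simpa using hi2
    rwa [e1, e2] at hd


lemma count_contain0 [DecidableEq α] (S : Finset α) (x : α) (m : ℕ) :
    ((S.powersetCard m).filter (fun A => x ∈ A)).card ≤ (S.card - 1).choose (m - 1) := by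
  by_cases hx : x ∈ S
  · have h1 : ((S.erase x).powersetCard (m-1)).card = (S.card - 1).choose (m-1) := by
      rw [card_powersetCard, card_erase_of_mem hx]
    rw [← h1]
    apply card_le_card_of_injOn (fun A => A.erase x)
    · intro A hA
      simp only [mem_coe, mem_filter, mem_powersetCard] at hA
      obtain ⟨⟨hsub, hcard⟩, hxA⟩ := hA
      rw [mem_coe, mem_powersetCard]
      exact ⟨erase_subset_erase _ hsub, by rw [card_erase_of_mem hxA, hcard]⟩
    · intro A hA B hB hAB
      simp only [coe_filter, Set.mem_setOf_eq, mem_powersetCard] at hA hB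
      rw [← insert_erase hA.2, ← insert_erase hB.2]
      simp only at hAB
      rw [hAB]
  · have h0 : ((S.powersetCard m).filter (fun A => x ∈ A)) = ∅ := by
      rw [filter_eq_empty_iff]
      intro A hA hxA
      rw [mem_powersetCard] at hA
      exact hx (hA.1 hxA)
    simp [h0]

lemma count_meet [DecidableEq α] (S B : Finset α) (m : ℕ) :
    ((S.powersetCard m).filter (fun A => ¬ Disjoint B A)).card
      ≤ B.card * (S.card - 1).choose (m - 1) := by
  have hsub : ((S.powersetCard m).filter (fun A => ¬ Disjoint B A))
      ⊆ B.biUnion (fun x => (S.powersetCard m).filter (fun A => x ∈ A)) := by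
    intro A hA
    simp only [mem_filter] at hA
    obtain ⟨hA1, hA2⟩ := hA
    rw [Finset.not_disjoint_iff] at hA2
    obtain ⟨x, hxB, hxA⟩ := hA2
    rw [mem_biUnion]
    exact ⟨x, hxB, by simp [mem_filter, hA1, hxA]⟩
  calc ((S.powersetCard m).filter (fun A => ¬ Disjoint B A)).card
      ≤ (B.biUnion (fun x => (S.powersetCard m).filter (fun A => x ∈ A))).card :=
        card_le_card hsub
    _ ≤ ∑ x ∈ B, ((S.powersetCard m).filter (fun A => x ∈ A)).card := card_biUnion_le
    _ ≤ ∑ _x ∈ B, (S.card - 1).choose (m - 1) := by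
        apply Finset.sum_le_sum; intro x _; exact count_contain0 S x m
    _ = B.card * (S.card - 1).choose (m - 1) := by rw [Finset.sum_const, smul_eq_mul]

lemma mem_Fam_card {i : ℕ} (hi : i < n) {A : Finset α} (hA : A ∈ Fam m n L1 i) :
    A.card = m ∧ A ⊆ L1 ⟨i, hi⟩ := by
  rw [Fam, dif_pos hi, mem_powersetCard] at hA
  exact ⟨hA.2, hA.1⟩

lemma bad_card (N : ℕ) (hcard : ∀ i, (L1 i).card = N) {j l : ℕ} (hj : j < n)
    (hl1 : 1 ≤ l) (hl2 : 2 * l ≤ j + 1) :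
    (BadSet m n L1 j l).card ≤ g m n L1 (j+1-l) * (m * (N - 1).choose (m-1))^l := by
  classical
  set D := m * (N - 1).choose (m-1) with hD
  -- target sigma set
  set T := (Gd m n L1 (j+1-l)).sigma (fun P => Fintype.piFinset (fun t : Fin l =>
      (Fam m n L1 (j+1-l+t.val)).filter
        (fun A => ¬ Disjoint (P ⟨j+1-2*l+t.val, by omega⟩) A))) with hT
  have hTcard : T.card ≤ g m n L1 (j+1-l) * D^l := by
    rw [hT, card_sigma]
    have hbound : ∀ P ∈ Gd m n L1 (j+1-l),
        (Fintype.piFinset (fun t : Fin l =>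
          (Fam m n L1 (j+1-l+t.val)).filter
            (fun A => ¬ Disjoint (P ⟨j+1-2*l+t.val, by omega⟩) A))).card ≤ D^l := by
      intro P hP
      rw [Fintype.card_piFinset]
      calc ∏ t : Fin l, ((Fam m n L1 (j+1-l+t.val)).filter
            (fun A => ¬ Disjoint (P ⟨j+1-2*l+t.val, by omega⟩) A)).card
          ≤ ∏ _t : Fin l, D := by
            apply Finset.prod_le_prod' -- might be prod_le_prod of nat
            intro t _
            have hpos : j+1-l+t.val < n := by omega
            have hpos2 : j+1-2*l+t.val < j+1-l := by omega
            have hFam : Fam m n L1 (j+1-l+t.val) = (L1 ⟨j+1-l+t.val, hpos⟩).powersetCard m := by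
              rw [Fam, dif_pos hpos]
            have hPmem : P ⟨j+1-2*l+t.val, hpos2⟩ ∈ Fam m n L1 (j+1-2*l+t.val) := by
              rw [Gd, mem_filter] at hP
              exact mem_Seqs.mp hP.1 ⟨j+1-2*l+t.val, hpos2⟩
            have hPcard : (P ⟨j+1-2*l+t.val, hpos2⟩).card = m :=
              (mem_Fam_card (by omega) hPmem).1
            calc ((Fam m n L1 (j+1-l+t.val)).filter
                  (fun A => ¬ Disjoint (P ⟨j+1-2*l+t.val, by omega⟩) A)).card
                = (((L1 ⟨j+1-l+t.val, hpos⟩).powersetCard m).filter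
                  (fun A => ¬ Disjoint (P ⟨j+1-2*l+t.val, hpos2⟩) A)).card := by rw [hFam]
              _ ≤ (P ⟨j+1-2*l+t.val, hpos2⟩).card *
                    (((L1 ⟨j+1-l+t.val, hpos⟩).card) - 1).choose (m-1) :=
                  count_meet _ _ m
              _ = D := by rw [hPcard, hcard, hD]
        _ = D^l := by rw [Finset.prod_const, card_univ, Fintype.card_fin]
    calc ∑ P ∈ Gd m n L1 (j+1-l), (Fintype.piFinset (fun t : Fin l =>
          (Fam m n L1 (j+1-l+t.val)).filter
            (fun A => ¬ Disjoint (P ⟨j+1-2*l+t.val, by omega⟩) A))).card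
        ≤ ∑ _P ∈ Gd m n L1 (j+1-l), D^l := Finset.sum_le_sum hbound
      _ = g m n L1 (j+1-l) * D^l := by rw [Finset.sum_const, smul_eq_mul, g]
  refine le_trans ?_ hTcard
  apply card_le_card_of_injOn (fun M =>
    (⟨resLE (by omega) M, fun t : Fin l => M ⟨j+1-l+t.val, by omega⟩⟩ :
      Σ _P : Fin (j+1-l) → Finset α, (Fin l → Finset α)))
  · intro M hM
    rw [BadSet, mem_coe, mem_filter] at hM
    obtain ⟨hMS, hMgood, hMbad⟩ := hM
    rw [hT, mem_coe, mem_sigma]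
    refine ⟨?_, ?_⟩
    · show resLE (by omega) M ∈ Gd m n L1 (j+1-l)
      rw [Gd, mem_filter]
      exact ⟨res_mem_Seqs (by omega) hMS, hMgood⟩
    · show (fun t : Fin l => M ⟨j+1-l+t.val, by omega⟩) ∈ _
      rw [Fintype.mem_piFinset]
      intro t
      rw [mem_filter]
      refine ⟨mem_Seqs.mp hMS ⟨j+1-l+t.val, by omega⟩, ?_⟩
      exact hMbad t.val t.isLt hl2
  · intro M hM M' hM' hEq
    simp only at hEq
    have h1 : resLE (show j+1-l ≤ j+1 by omega) M = resLE (by omega) M' :=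
      congrArg (fun s : (Σ _P : Fin (j+1-l) → Finset α, (Fin l → Finset α)) => s.fst) hEq
    have h2' : (fun t : Fin l => M ⟨j+1-l+t.val, by omega⟩)
        = (fun t : Fin l => M' ⟨j+1-l+t.val, by omega⟩) :=
      congrArg (fun s : (Σ _P : Fin (j+1-l) → Finset α, (Fin l → Finset α)) => s.snd) hEq
    funext i
    by_cases hi : i.val < j+1-l
    · have := congrFun h1 ⟨i.val, hi⟩
      exact this
    · have ht : i.val - (j+1-l) < l := by omega
      have := congrFun h2' ⟨i.val - (j+1-l), ht⟩
      simp only at this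
      have hidx : (⟨j+1-l+(i.val-(j+1-l)), by omega⟩ : Fin (j+1)) = i := by
        apply Fin.ext
        simp only
        omega
      rwa [hidx] at this


lemma geo_sum : ∀ K : ℕ, 4 * (∑ l ∈ Icc 1 K, 32^(K-l) * 2^(l-1)) + 2^K ≤ 32^K := by
  intro K
  induction K with
  | zero => simp
  | succ K ih =>
    rw [← Finset.insert_Icc_right_eq_Icc_add_one (by omega), Finset.sum_insert (by simp)]
    have hterm : 32^(K+1-(K+1)) * 2^(K+1-1) = 2^K := by simp
    have hrest : ∑ l ∈ Icc 1 K, 32^(K+1-l) * 2^(l-1)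
        = 32 * ∑ l ∈ Icc 1 K, 32^(K-l) * 2^(l-1) := by
      rw [Finset.mul_sum]
      apply Finset.sum_congr rfl
      intro l hl
      rw [mem_Icc] at hl
      have he : K+1-l = (K-l)+1 := by omega
      rw [he, pow_succ]
      ring
    rw [hterm, hrest]
    set S := ∑ l ∈ Icc 1 K, 32^(K-l) * 2^(l-1) with hS
    set A := (2:ℕ)^K with hA
    set B := (32:ℕ)^K with hB
    have e1 : (2:ℕ)^(K+1) = A * 2 := by rw [hA, pow_succ]
    have e2 : (32:ℕ)^(K+1) = B * 32 := by rw [hB, pow_succ]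
    rw [e1, e2]
    omega

lemma main_step (hm : 1 ≤ m) (hcard : ∀ i, (L1 i).card = 32*m^3+1) :
    ∀ j, j < n → (32*m^3+1).choose m * g m n L1 j ≤ 2 * g m n L1 (j+1) := by
  intro j
  induction j using Nat.strong_induction_on with
  | _ j ih =>
  intro hj
  have hm3 : m ≤ m^3 := Nat.le_self_pow (by norm_num) m
  set N := 32*m^3+1 with hN
  set C := N.choose m with hC
  set D := m * (N-1).choose (m-1) with hD
  have hmN : m ≤ N := by omega
  have hCpos : 0 < C := Nat.choose_pos hmN
  have hND : N * D = m^2 * C := by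
    have h1 := Nat.add_one_mul_choose_eq (N-1) (m-1)
    have h2 : N-1+1 = N := by omega
    have h3 : m-1+1 = m := by omega
    rw [h2, h3] at h1
    calc N * D = m * (N * ((N-1).choose (m-1))) := by rw [hD]; ring
      _ = m * (N.choose m * m) := by rw [h1]
      _ = m^2 * C := by rw [hC]; ring
  -- chained induction hypothesis
  have chain : ∀ d : ℕ, 2*d+1 ≤ j → C^d * g m n L1 (j-d) ≤ 2^d * g m n L1 j := by
    intro d
    induction d with
    | zero => intro _; simpa using le_refl (g m n L1 j)
    | succ d ihd =>
      intro hdj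
      have hstep : C * g m n L1 (j-d-1) ≤ 2 * g m n L1 (j-d-1+1) :=
        ih (j-d-1) (by omega) (by omega)
      have hidx : j - d - 1 + 1 = j - d := by omega
      rw [hidx] at hstep
      have h1 : C^(d+1) * g m n L1 (j-(d+1)) = C^d * (C * g m n L1 (j-d-1)) := by
        rw [pow_succ]
        have he : j - (d+1) = j - d - 1 := by omega
        rw [he]; ring
      rw [h1]
      calc C^d * (C * g m n L1 (j-d-1)) ≤ C^d * (2 * g m n L1 (j-d)) :=
            Nat.mul_le_mul_left _ hstep
        _ = 2 * (C^d * g m n L1 (j-d)) := by ring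
        _ ≤ 2 * (2^d * g m n L1 j) := Nat.mul_le_mul_left _ (ihd (by omega))
        _ = 2^(d+1) * g m n L1 j := by rw [pow_succ]; ring
  -- per-period bound
  have step1 : ∀ l, 1 ≤ l → 2*l ≤ j+1 →
      32^l * (g m n L1 (j+1-l) * D^l) ≤ 2^(l-1) * (C * g m n L1 j) := by
    intro l hl1 hl2
    set g' := g m n L1 (j+1-l) with hg'
    set gj := g m n L1 j with hgj
    have hch : C^(l-1) * g' ≤ 2^(l-1) * gj := by
      have h0 := chain (l-1) (by omega)
      have hidx : j - (l-1) = j+1-l := by omega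
      rwa [hidx] at h0
    have h3 : N^l * (C^(l-1) * g' * D^l) ≤ N^l * (2^(l-1) * gj * D^l) :=
      Nat.mul_le_mul_left _ (Nat.mul_le_mul_right _ hch)
    have h4 : N^l * (2^(l-1) * gj * D^l) = C^(l-1) * (2^(l-1) * gj * (m^2)^l * C) := by
      have hndl : N^l * D^l = (m^2)^l * C^l := by rw [← mul_pow, hND, mul_pow]
      have hCl : C^l = C * C^(l-1) := by
        conv_lhs => rw [show l = (l-1)+1 by omega]
        rw [pow_succ]; ring
      calc N^l * (2^(l-1) * gj * D^l) = 2^(l-1) * gj * (N^l * D^l) := by ring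
        _ = 2^(l-1) * gj * ((m^2)^l * C^l) := by rw [hndl]
        _ = 2^(l-1) * gj * ((m^2)^l * (C * C^(l-1))) := by rw [← hCl]
        _ = C^(l-1) * (2^(l-1) * gj * (m^2)^l * C) := by ring
    have h5 : N^l * (g' * D^l) ≤ 2^(l-1) * gj * (m^2)^l * C := by
      apply Nat.le_of_mul_le_mul_left _ (Nat.pow_pos (n := l-1) hCpos)
      calc C^(l-1) * (N^l * (g' * D^l)) = N^l * (C^(l-1) * g' * D^l) := by ring
        _ ≤ N^l * (2^(l-1) * gj * D^l) := h3
        _ = C^(l-1) * (2^(l-1) * gj * (m^2)^l * C) := h4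
    have h32 : 32*m^3 ≤ N := by omega
    have h6 : (32^l * (m^2)^l * m^l) * (g' * D^l) ≤ N^l * (g' * D^l) := by
      apply Nat.mul_le_mul_right
      calc 32^l * (m^2)^l * m^l = (32*(m^2*m))^l := by
            rw [mul_pow, mul_pow]; ring
        _ = (32*m^3)^l := by rw [← pow_succ]
        _ ≤ N^l := Nat.pow_le_pow_left h32 l
    have h7 : (m^2)^l * (32^l * (g' * D^l)) ≤ (m^2)^l * (2^(l-1) * (C * gj)) := by
      have hml : 1 ≤ m^l := Nat.one_le_pow _ _ hm
      calc (m^2)^l * (32^l * (g' * D^l)) = 1 * ((m^2)^l * (32^l * (g' * D^l))) := by ring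
        _ ≤ m^l * ((m^2)^l * (32^l * (g' * D^l))) := Nat.mul_le_mul_right _ hml
        _ = (32^l * (m^2)^l * m^l) * (g' * D^l) := by ring
        _ ≤ N^l * (g' * D^l) := h6
        _ ≤ 2^(l-1) * gj * (m^2)^l * C := h5
        _ = (m^2)^l * (2^(l-1) * (C * gj)) := by ring
    exact Nat.le_of_mul_le_mul_left h7 (Nat.pow_pos (n := l) (by positivity))
  -- assemble
  set K := (j+1)/2 with hK
  have hA := ext_lower (m := m) (n := n) (L1 := L1) N hcard hj
  have hsplit : ((Seqs m n L1 (j+1)).filter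
      (fun M => GoodP j (resLE (Nat.le_succ j) M))).card
      ≤ g m n L1 (j+1) + ∑ l ∈ Icc 1 K, (BadSet m n L1 j l).card := by
    have hsub : (Seqs m n L1 (j+1)).filter (fun M => GoodP j (resLE (Nat.le_succ j) M))
        ⊆ Gd m n L1 (j+1) ∪ (Icc 1 K).biUnion (fun l => BadSet m n L1 j l) := by
      intro M hM
      rw [mem_filter] at hM
      by_cases hg : GoodP (j+1) M
      · exact mem_union_left _ (by rw [Gd, mem_filter]; exact ⟨hM.1, hg⟩)
      · apply mem_union_right
        apply bad_decomp
        rw [mem_filter]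
        exact ⟨hM.1, hM.2, hg⟩
    calc ((Seqs m n L1 (j+1)).filter
          (fun M => GoodP j (resLE (Nat.le_succ j) M))).card
        ≤ (Gd m n L1 (j+1) ∪ (Icc 1 K).biUnion (fun l => BadSet m n L1 j l)).card :=
          card_le_card hsub
      _ ≤ (Gd m n L1 (j+1)).card + ((Icc 1 K).biUnion (fun l => BadSet m n L1 j l)).card :=
          card_union_le _ _
      _ ≤ g m n L1 (j+1) + ∑ l ∈ Icc 1 K, (BadSet m n L1 j l).card := by
          apply Nat.add_le_add_left card_biUnion_le
  have hbadsum : ∑ l ∈ Icc 1 K, (BadSet m n L1 j l).card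
      ≤ ∑ l ∈ Icc 1 K, g m n L1 (j+1-l) * D^l := by
    apply Finset.sum_le_sum
    intro l hl
    rw [mem_Icc] at hl
    exact bad_card N hcard hj hl.1 (by omega)
  set T := ∑ l ∈ Icc 1 K, g m n L1 (j+1-l) * D^l with hT
  have hsumT : 4 * T ≤ C * g m n L1 j := by
    have hmul : ∀ l ∈ Icc 1 K, 32^K * (g m n L1 (j+1-l) * D^l)
        ≤ 32^(K-l) * 2^(l-1) * (C * g m n L1 j) := by
      intro l hl
      rw [mem_Icc] at hl
      have h1 := step1 l hl.1 (by omega)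
      calc 32^K * (g m n L1 (j+1-l) * D^l)
          = 32^(K-l) * (32^l * (g m n L1 (j+1-l) * D^l)) := by
            have hpow : (32:ℕ)^(K-l) * 32^l = 32^K := by
              rw [← pow_add]; congr 1; omega
            rw [← hpow]; ring
        _ ≤ 32^(K-l) * (2^(l-1) * (C * g m n L1 j)) := Nat.mul_le_mul_left _ h1
        _ = 32^(K-l) * 2^(l-1) * (C * g m n L1 j) := by ring
    have hs : 32^K * T ≤ (∑ l ∈ Icc 1 K, 32^(K-l)*2^(l-1)) * (C * g m n L1 j) := by
      rw [hT, Finset.mul_sum, Finset.sum_mul]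
      exact Finset.sum_le_sum hmul
    have hgeo : 4 * (∑ l ∈ Icc 1 K, 32^(K-l)*2^(l-1)) ≤ 32^K :=
      le_trans (Nat.le_add_right _ _) (geo_sum K)
    have h2 : 32^K * (4 * T) ≤ 32^K * (C * g m n L1 j) := by
      calc 32^K * (4*T) = 4 * (32^K * T) := by ring
        _ ≤ 4 * ((∑ l ∈ Icc 1 K, 32^(K-l)*2^(l-1)) * (C * g m n L1 j)) :=
            Nat.mul_le_mul_left _ hs
        _ = (4 * (∑ l ∈ Icc 1 K, 32^(K-l)*2^(l-1))) * (C * g m n L1 j) := by ring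
        _ ≤ 32^K * (C * g m n L1 j) := Nat.mul_le_mul_right _ hgeo
    exact Nat.le_of_mul_le_mul_left h2 (Nat.pow_pos (n := K) (by norm_num))
  have hfin : C * g m n L1 j ≤ g m n L1 (j+1) + T :=
    hA.trans (hsplit.trans (Nat.add_le_add_left hbadsum _))
  have hgoal : ∀ X Y T2 : ℕ, X ≤ Y + T2 → 4 * T2 ≤ X → X ≤ 2 * Y := by
    intro X Y T2 h1 h2; omega
  exact hgoal _ _ _ hfin hsumT


lemma g_zero : g m n L1 0 = 1 := by
  have h1 : Gd m n L1 0 = Seqs m n L1 0 := by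
    rw [Gd, filter_eq_self]
    intro M _ i l h hl
    omega
  rw [g, h1, Seqs, Fintype.card_piFinset]
  simp

lemma g_pos (hm : 1 ≤ m) (hcard : ∀ i, (L1 i).card = 32*m^3+1) :
    ∀ j, j ≤ n → 0 < g m n L1 j := by
  intro j
  induction j with
  | zero => intro _; rw [g_zero]; norm_num
  | succ j ihj =>
    intro hj
    have h1 := main_step hm hcard j (by omega)
    have h2 : 0 < g m n L1 j := ihj (by omega)
    have hC : 0 < (32*m^3+1).choose m := by
      apply Nat.choose_pos
      have : m ≤ m^3 := Nat.le_self_pow (by norm_num) m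
      omega
    have h3 : 1 ≤ (32*m^3+1).choose m * g m n L1 j := Nat.one_le_iff_ne_zero.mpr (by positivity)
    omega

end NonRepChoose2

/-- Every simple path is non-repetitively `(32m³+1 : m)`-choosable: for every `m ≥ 1`,
every `n`, and every list assignment `L` with at least `32m³+1` colors at each position,
there exists a list assignment `M` with `M i ⊆ L i` and `|M i| ≥ m` for each position,
such that every coloring `c` with `c i ∈ M i` for all `i` is non-repetitive. -/
theorem path_nonrepetitively_choosable {α : Type*} (m n : ℕ) (hm : 1 ≤ m)
    (L : Fin n → Finset α) (hL : ∀ i, 32 * m ^ 3 + 1 ≤ (L i).card) :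
    ∃ M : Fin n → Finset α,
      (∀ i, M i ⊆ L i) ∧
      (∀ i, m ≤ (M i).card) ∧
      (∀ c : Fin n → α, (∀ i, c i ∈ M i) → NonRepetitive c) := by
  classical
  have hsub : ∀ i : Fin n, ∃ t ⊆ L i, t.card = 32*m^3+1 := fun i =>
    Finset.exists_subset_card_eq (hL i)
  choose L1 hL1sub hL1card using hsub
  have hpos : 0 < NonRepChoose2.g m n L1 n := NonRepChoose2.g_pos hm hL1card n le_rfl
  obtain ⟨M, hM⟩ := Finset.card_pos.mp hpos
  rw [NonRepChoose2.Gd, Finset.mem_filter] at hM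
  obtain ⟨hMS, hMgood⟩ := hM
  refine ⟨M, ?_, ?_, ?_⟩
  · intro i
    have h := NonRepChoose2.mem_Seqs.mp hMS i
    have h2 := NonRepChoose2.mem_Fam_card i.isLt h
    exact h2.2.trans (hL1sub i)
  · intro i
    have h := NonRepChoose2.mem_Seqs.mp hMS i
    have h2 := NonRepChoose2.mem_Fam_card i.isLt h
    exact le_of_eq h2.1.symm
  · intro c hc i l h hl hrep
    obtain ⟨k, hk, hd⟩ := hMgood i l h hl
    have h1 := hc ⟨i+k, by omega⟩
    have h2 := hc ⟨i+l+k, by omega⟩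
    rw [hrep k hk] at h1
    exact (Finset.disjoint_left.mp hd h1) h2
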